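/- arXiv:1307.4267 — 2 statements merged into one kernel-verified Lean document; each statement's English description precedes it below -/
import Mathlib

section
/- Define J(y) = ∑_{k=1}^{N+2} (p(k)/2)(Δ²y(k-2))² − ∑_{k=1}^{N+1} (q(k)/2)(Δy(k-1))² + ∑_{k=1}^{N} F(k,y(k)) on the space E of functions y : Z[-1,N+2] → ℝ with zero boundary values, where F(k,s) = ∫₀ˢ f(k,t)dt. Then y₀ ∈ E is a critical point of J (i.e., the Gateaux derivative δJ(y₀;h) vanishes for all h ∈ E) if and only if y₀ solves Δ²(p(k)Δ²y₀(k-2)) + Δ(q(k)Δy₀(k-1)) + f(k,y₀(k)) = 0 for all k ∈ Z[1,N]. -/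
open Finset

/-- Forward difference `Δy(k) = y(k+1) - y(k)`. -/
def fd (y : ℤ → ℝ) (k : ℤ) : ℝ := y (k + 1) - y k

/-- Second forward difference `Δ²y(k) = y(k+2) - 2y(k+1) + y(k)`. -/
def fd2 (y : ℤ → ℝ) (k : ℤ) : ℝ := y (k + 2) - 2 * y (k + 1) + y k

/-- Dirichlet boundary conditions `y(-1) = y(0) = y(N+1) = y(N+2) = 0`. -/
def bc (N : ℕ) (y : ℤ → ℝ) : Prop :=
  y (-1) = 0 ∧ y 0 = 0 ∧ y ((N : ℤ) + 1) = 0 ∧ y ((N : ℤ) + 2) = 0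

/-- `y` satisfies `Δ²(p(k)Δ²y(k-2)) + Δ(q(k)Δy(k-1)) + f(k,y(k)) = 0` for `k ∈ Z[1,N]`. -/
def solves (N : ℕ) (p q : ℤ → ℝ) (f : ℤ → ℝ → ℝ) (y : ℤ → ℝ) : Prop :=
  ∀ k ∈ Finset.Icc (1 : ℤ) (N : ℤ),
    fd2 (fun j => p j * fd2 y (j - 2)) k
      + fd (fun j => q j * fd y (j - 1)) k + f k (y k) = 0

/-- `F(k,s) = ∫₀ˢ f(k,t) dt`. -/
noncomputable def Fint (f : ℤ → ℝ → ℝ) (k : ℤ) (s : ℝ) : ℝ := ∫ t in (0 : ℝ)..s, f k t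

/-- The energy functional
`J(y) = ∑_{k=1}^{N+2} (p(k)/2)(Δ²y(k-2))² − ∑_{k=1}^{N+1} (q(k)/2)(Δy(k-1))² + ∑_{k=1}^{N} F(k,y(k))`. -/
noncomputable def J (N : ℕ) (p q : ℤ → ℝ) (f : ℤ → ℝ → ℝ) (y : ℤ → ℝ) : ℝ :=
  ∑ k ∈ Finset.Icc (1 : ℤ) ((N : ℤ) + 2), p k / 2 * (fd2 y (k - 2)) ^ 2
    - ∑ k ∈ Finset.Icc (1 : ℤ) ((N : ℤ) + 1), q k / 2 * (fd y (k - 1)) ^ 2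
    + ∑ k ∈ Finset.Icc (1 : ℤ) (N : ℤ), Fint f k (y k)

/-- Shift of summation index. -/
lemma sum_shift (a b c : ℤ) (F : ℤ → ℝ) :
    ∑ k ∈ Icc a b, F k = ∑ k ∈ Icc (a - c) (b - c), F (k + c) := by
  rw [show Icc a b = Finset.map (addRightEmbedding c) (Icc (a-c) (b-c)) by
    rw [Finset.map_add_right_Icc]; ring_nf, Finset.sum_map]
  simp

/-- Restricting a sum against a function vanishing at the boundary. -/
lemma sum_restrict (N : ℕ) (h : ℤ → ℝ) (hh : bc N h) (c : ℤ → ℝ) (a b : ℤ)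
    (ha : -1 ≤ a) (ha1 : a ≤ 1) (hb : (N:ℤ) ≤ b) (hb2 : b ≤ (N:ℤ)+2) :
    ∑ k ∈ Icc a b, c k * h k = ∑ k ∈ Icc 1 (N:ℤ), c k * h k := by
  obtain ⟨h1, h2, h3, h4⟩ := hh
  refine (Finset.sum_subset (Finset.Icc_subset_Icc ha1 hb) ?_).symm
  intro x hx hx'
  simp only [Finset.mem_Icc] at hx hx'
  have : x = -1 ∨ x = 0 ∨ x = (N:ℤ)+1 ∨ x = (N:ℤ)+2 := by omega
  rcases this with rfl | rfl | rfl | rfl <;> simp [h1, h2, h3, h4]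

lemma derivJ (N : ℕ) (p q : ℤ → ℝ) (f : ℤ → ℝ → ℝ)
    (hf : ∀ k ∈ Finset.Icc (1 : ℤ) (N : ℤ), Continuous (f k))
    (y₀ h : ℤ → ℝ) :
    HasDerivAt (fun ε : ℝ => J N p q f (fun k => y₀ k + ε * h k))
      (∑ k ∈ Icc (1:ℤ) ((N:ℤ)+2), p k * (fd2 y₀ (k-2) * fd2 h (k-2))
        - ∑ k ∈ Icc (1:ℤ) ((N:ℤ)+1), q k * (fd y₀ (k-1) * fd h (k-1))
        + ∑ k ∈ Icc (1:ℤ) (N:ℤ), f k (y₀ k) * h k) 0 := by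
  unfold J
  apply HasDerivAt.add
  · apply HasDerivAt.sub
    · apply HasDerivAt.fun_sum
      intro k _
      have key : (fun ε : ℝ => p k / 2 * (fd2 (fun j => y₀ j + ε * h j) (k - 2)) ^ 2)
          = fun ε : ℝ => p k / 2 * (fd2 y₀ (k-2) + ε * fd2 h (k-2)) ^ 2 := by
        funext ε; simp only [fd2]; ring
      rw [key]
      have h1 : HasDerivAt (fun ε : ℝ => fd2 y₀ (k-2) + ε * fd2 h (k-2)) (fd2 h (k-2)) 0 := by
        simpa using ((hasDerivAt_id (0:ℝ)).mul_const (fd2 h (k-2))).const_add (fd2 y₀ (k-2))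
      have h2 := (h1.fun_pow 2).const_mul (p k / 2)
      refine h2.congr_deriv ?_
      push_cast
      ring
    · apply HasDerivAt.fun_sum
      intro k _
      have key : (fun ε : ℝ => q k / 2 * (fd (fun j => y₀ j + ε * h j) (k - 1)) ^ 2)
          = fun ε : ℝ => q k / 2 * (fd y₀ (k-1) + ε * fd h (k-1)) ^ 2 := by
        funext ε; simp only [fd]; ring
      rw [key]
      have h1 : HasDerivAt (fun ε : ℝ => fd y₀ (k-1) + ε * fd h (k-1)) (fd h (k-1)) 0 := by
        simpa using ((hasDerivAt_id (0:ℝ)).mul_const (fd h (k-1))).const_add (fd y₀ (k-1))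
      have h2 := (h1.fun_pow 2).const_mul (q k / 2)
      refine h2.congr_deriv ?_
      push_cast
      ring
  · apply HasDerivAt.fun_sum
    intro k hk
    have hc := hf k hk
    have inner : HasDerivAt (fun ε : ℝ => y₀ k + ε * h k) (h k) 0 := by
      simpa using ((hasDerivAt_id (0:ℝ)).mul_const (h k)).const_add (y₀ k)
    have outer : HasDerivAt (fun u => ∫ t in (0:ℝ)..u, f k t) (f k (y₀ k)) (y₀ k + 0 * h k) := by
      simpa using intervalIntegral.integral_hasDerivAt_right
        (hc.intervalIntegrable _ _) hc.stronglyMeasurable.stronglyMeasurableAtFilter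
        hc.continuousAt
    simpa [Fint, Function.comp_def] using outer.comp 0 inner

lemma L_eq (N : ℕ) (p q : ℤ → ℝ) (f : ℤ → ℝ → ℝ) (y₀ h : ℤ → ℝ) (hh : bc N h) :
    ∑ k ∈ Icc (1:ℤ) ((N:ℤ)+2), p k * (fd2 y₀ (k-2) * fd2 h (k-2))
      - ∑ k ∈ Icc (1:ℤ) ((N:ℤ)+1), q k * (fd y₀ (k-1) * fd h (k-1))
      + ∑ k ∈ Icc (1:ℤ) (N:ℤ), f k (y₀ k) * h k
    = ∑ k ∈ Icc (1:ℤ) (N:ℤ),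
        (fd2 (fun j => p j * fd2 y₀ (j - 2)) k + fd (fun j => q j * fd y₀ (j - 1)) k
          + f k (y₀ k)) * h k := by
  set g : ℤ → ℝ := fun j => p j * fd2 y₀ (j - 2) with hg
  set w : ℤ → ℝ := fun j => q j * fd y₀ (j - 1) with hw
  have hp : ∑ k ∈ Icc (1:ℤ) ((N:ℤ)+2), p k * (fd2 y₀ (k-2) * fd2 h (k-2))
      = ∑ k ∈ Icc (1:ℤ) (N:ℤ), fd2 g k * h k := by
    have step1 : ∑ k ∈ Icc (1:ℤ) ((N:ℤ)+2), p k * (fd2 y₀ (k-2) * fd2 h (k-2))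
        = ∑ k ∈ Icc (1:ℤ) ((N:ℤ)+2), (g k * h k - 2 * (g k * h (k-1)) + g k * h (k-2)) := by
      refine Finset.sum_congr rfl fun k _ => ?_
      have e1 : k - 2 + 2 = k := by ring
      have e2 : k - 2 + 1 = k - 1 := by ring
      simp only [hg, fd2, e1, e2]
      ring
    have step2 : ∑ k ∈ Icc (1:ℤ) ((N:ℤ)+2), g k * h (k-1)
        = ∑ k ∈ Icc (0:ℤ) ((N:ℤ)+1), g (k+1) * h k := by
      rw [sum_shift (1:ℤ) ((N:ℤ)+2) 1, show (1:ℤ)-1 = 0 by ring,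
        show (N:ℤ)+2-1 = (N:ℤ)+1 by ring]
      refine Finset.sum_congr rfl fun k _ => ?_
      rw [show k+1-1 = k by ring]
    have step3 : ∑ k ∈ Icc (1:ℤ) ((N:ℤ)+2), g k * h (k-2)
        = ∑ k ∈ Icc (-1:ℤ) ((N:ℤ)), g (k+2) * h k := by
      rw [sum_shift (1:ℤ) ((N:ℤ)+2) 2, show (1:ℤ)-2 = -1 by ring,
        show (N:ℤ)+2-2 = (N:ℤ) by ring]
      refine Finset.sum_congr rfl fun k _ => ?_
      rw [show k+2-2 = k by ring]
    rw [step1, Finset.sum_add_distrib, Finset.sum_sub_distrib, ← Finset.mul_sum, step2, step3,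
      sum_restrict N h hh g 1 ((N:ℤ)+2) (by omega) le_rfl (by omega) (by omega),
      sum_restrict N h hh (fun k => g (k+1)) 0 ((N:ℤ)+1) (by omega) (by omega) (by omega) (by omega),
      sum_restrict N h hh (fun k => g (k+2)) (-1) (N:ℤ) (by omega) (by omega) le_rfl (by omega),
      Finset.mul_sum, ← Finset.sum_sub_distrib, ← Finset.sum_add_distrib]
    refine Finset.sum_congr rfl fun k _ => ?_
    simp only [fd2]
    ring
  have hq : ∑ k ∈ Icc (1:ℤ) ((N:ℤ)+1), q k * (fd y₀ (k-1) * fd h (k-1))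
      = ∑ k ∈ Icc (1:ℤ) (N:ℤ), (-(fd w k)) * h k := by
    have step1 : ∑ k ∈ Icc (1:ℤ) ((N:ℤ)+1), q k * (fd y₀ (k-1) * fd h (k-1))
        = ∑ k ∈ Icc (1:ℤ) ((N:ℤ)+1), (w k * h k - w k * h (k-1)) := by
      refine Finset.sum_congr rfl fun k _ => ?_
      have e1 : k - 1 + 1 = k := by ring
      simp only [hw, fd, e1]
      ring
    have step2 : ∑ k ∈ Icc (1:ℤ) ((N:ℤ)+1), w k * h (k-1)
        = ∑ k ∈ Icc (0:ℤ) ((N:ℤ)), w (k+1) * h k := by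
      rw [sum_shift (1:ℤ) ((N:ℤ)+1) 1, show (1:ℤ)-1 = 0 by ring,
        show (N:ℤ)+1-1 = (N:ℤ) by ring]
      refine Finset.sum_congr rfl fun k _ => ?_
      rw [show k+1-1 = k by ring]
    rw [step1, Finset.sum_sub_distrib, step2,
      sum_restrict N h hh w 1 ((N:ℤ)+1) (by omega) le_rfl (by omega) (by omega),
      sum_restrict N h hh (fun k => w (k+1)) 0 (N:ℤ) (by omega) (by omega) le_rfl (by omega),
      ← Finset.sum_sub_distrib]
    refine Finset.sum_congr rfl fun k _ => ?_
    simp only [fd]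
    ring
  rw [hp, hq, ← Finset.sum_sub_distrib, ← Finset.sum_add_distrib]
  refine Finset.sum_congr rfl fun k _ => ?_
  ring

/-- A function `y₀ ∈ E` is a critical point of `J` (the Gateaux derivative
`δJ(y₀;h)` vanishes for every direction `h ∈ E`) iff `y₀` solves the BVP. -/
theorem stmt_7 (N : ℕ) (hN : 1 ≤ N) (p q : ℤ → ℝ) (f : ℤ → ℝ → ℝ)
    (hf : ∀ k ∈ Finset.Icc (1 : ℤ) (N : ℤ), Continuous (f k))
    (y₀ : ℤ → ℝ) (hy₀ : bc N y₀) :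
    (∀ h : ℤ → ℝ, bc N h →
        HasDerivAt (fun ε : ℝ => J N p q f (fun k => y₀ k + ε * h k)) 0 0)
      ↔ solves N p q f y₀ := by
  constructor
  · intro hcrit k hk
    simp only [Finset.mem_Icc] at hk
    set h : ℤ → ℝ := fun m => if m = k then (1:ℝ) else 0 with hdef
    have hbc : bc N h := by
      refine ⟨?_, ?_, ?_, ?_⟩ <;> simp only [hdef] <;> rw [if_neg (by omega)]
    have H1 := hcrit h hbc
    have H2 := derivJ N p q f hf y₀ h
    have H3 := H2.unique H1
    rw [L_eq N p q f y₀ h hbc] at H3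
    rw [Finset.sum_eq_single k (fun b _ hb => by simp [hdef, hb]) (fun hb => by
      simp [Finset.mem_Icc] at hb; omega)] at H3
    simpa [hdef] using H3
  · intro hs h hbc
    have H := derivJ N p q f hf y₀ h
    have hz : ∑ k ∈ Icc (1:ℤ) (N:ℤ),
        (fd2 (fun j => p j * fd2 y₀ (j - 2)) k + fd (fun j => q j * fd y₀ (j - 1)) k
          + f k (y₀ k)) * h k = 0 :=
      Finset.sum_eq_zero fun k hk => by rw [hs k hk, zero_mul]
    rwa [L_eq N p q f y₀ h hbc, hz] at H
end

section
/- Suppose there exists m > 0 such that s·f(k,s) ≥ 0 for all |s| ≥ m and k ∈ Z[1,N], and suppose η'(p)·p_min − η(q)·q_max > 0. Then the functional J(y) = ∑_{k=1}^{N+2}(p(k)/2)(Δ²y(k-2))² − ∑_{k=1}^{N+1}(q(k)/2)(Δy(k-1))² + ∑_{k=1}^{N}F(k,y(k)) is coercive on E, i.e., J(y) → +∞ as ‖y‖ → ∞, and the boundary value problem Δ²(p(k)Δ²y(k-2)) + Δ(q(k)Δy(k-1)) + f(k,y(k)) = 0, y(-1)=y(0)=y(N+1)=y(N+2)=0, has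 at least one solution. -/
open Finset Matrix

/-- The (N+1)×N first-difference matrix under zero boundary conditions. -/
def Vmat (N : ℕ) : Matrix (Fin (N + 1)) (Fin N) ℝ := fun i j =>
  if (i : ℕ) = (j : ℕ) then 1 else if (i : ℕ) = (j : ℕ) + 1 then -1 else 0

/-- The (N+2)×N second-difference matrix under zero boundary conditions. -/
def Wmat (N : ℕ) : Matrix (Fin (N + 2)) (Fin N) ℝ := fun i j =>
  if (i : ℕ) = (j : ℕ) then 1
  else if (i : ℕ) = (j : ℕ) + 1 then -2
  else if (i : ℕ) = (j : ℕ) + 2 then 1 else 0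

/-- `lam` is the smallest eigenvalue of the matrix `M`. -/
def IsSmallestEigenvalue {n : ℕ} (M : Matrix (Fin n) (Fin n) ℝ) (lam : ℝ) : Prop :=
  IsLeast {μ : ℝ | ∃ x : Fin n → ℝ, x ≠ 0 ∧ M.mulVec x = μ • x} lam

lemma quad_lower {n : ℕ} (M : Matrix (Fin n) (Fin n) ℝ) (hM : M.IsHermitian) {lam : ℝ}
    (h : IsSmallestEigenvalue M lam) (x : Fin n → ℝ) :
    lam * (∑ i, x i ^ 2) ≤ x ⬝ᵥ M.mulVec x := by
  classical
  set b := hM.eigenvectorBasis with hb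
  have hle : ∀ i, lam ≤ hM.eigenvalues i := by
    intro i
    refine h.2 ⟨⇑(b i), ?_, hM.mulVec_eigenvectorBasis i⟩
    have := b.orthonormal.ne_zero i
    exact fun hc => this (by ext j; exact congrFun hc j)
  set X : EuclideanSpace ℝ (Fin n) := WithLp.toLp 2 x with hX
  have hsymm : (Matrix.toEuclideanLin M).IsSymmetric := Matrix.isHermitian_iff_isSymmetric.1 hM
  have hTX : Matrix.toEuclideanLin M X = (M.mulVec x : Fin n → ℝ) := by
    rfl
  have hrepr : ∀ i, b.repr (Matrix.toEuclideanLin M X) i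
      = hM.eigenvalues i * b.repr X i := by
    intro i
    rw [b.repr_apply_apply, b.repr_apply_apply, ← hsymm (b i) X]
    have : Matrix.toEuclideanLin M (b i) = hM.eigenvalues i • b i := by
      apply PiLp.ext; intro j
      have := congrFun (hM.mulVec_eigenvectorBasis i) j
      simpa using this
    rw [this, inner_smul_left]
    simp
  have hinner : x ⬝ᵥ M.mulVec x = ∑ i, hM.eigenvalues i * (b.repr X i)^2 := by
    have h1 : x ⬝ᵥ M.mulVec x = inner ℝ X (Matrix.toEuclideanLin M X) := by
      rw [PiLp.inner_apply]
      simp [hX, dotProduct, mul_comm]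
    rw [h1, ← b.repr.inner_map_map X (Matrix.toEuclideanLin M X)]
    simp only [PiLp.inner_apply, RCLike.inner_apply, starRingEnd_apply, star_trivial]
    refine Finset.sum_congr rfl fun i _ => ?_
    rw [hrepr i]; ring
  have hnorm : ∑ i, x i ^ 2 = ∑ i, (b.repr X i)^2 := by
    have h1 : (∑ i, x i ^ 2) = inner ℝ X X := by
      rw [PiLp.inner_apply]
      simp [hX, RCLike.inner_apply, sq]
    rw [h1, ← b.repr.inner_map_map X X]
    simp only [PiLp.inner_apply, RCLike.inner_apply, starRingEnd_apply, star_trivial]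
    refine Finset.sum_congr rfl fun i _ => ?_
    ring
  rw [hinner, hnorm, Finset.mul_sum]
  refine Finset.sum_le_sum fun i _ => ?_
  exact mul_le_mul_of_nonneg_right (hle i) (sq_nonneg _)

lemma sum_Icc_range (M : ℕ) (g : ℤ → ℝ) :
    ∑ k ∈ Finset.Icc (1:ℤ) (M:ℤ), g k = ∑ i ∈ Finset.range M, g ((i:ℤ)+1) := by
  induction M with
  | zero => simp
  | succ M ih =>
      have hins : Finset.Icc (1:ℤ) ((M:ℤ)+1) = insert ((M:ℤ)+1) (Finset.Icc (1:ℤ) (M:ℤ)) := by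
        ext k; simp only [Finset.mem_Icc, Finset.mem_insert]; omega
      have hnotmem : ((M:ℤ)+1) ∉ Finset.Icc (1:ℤ) (M:ℤ) := by
        simp only [Finset.mem_Icc]; omega
      push_cast
      rw [hins, Finset.sum_insert hnotmem, Finset.sum_range_succ, ih]
      push_cast; ring

def xof (N : ℕ) (y : ℤ → ℝ) : Fin N → ℝ := fun j => y (((j:ℕ):ℤ)+1)

lemma esum_eq {N : ℕ} {y : ℤ → ℝ} (hy : bc N y) (c : ℤ) (h1 : -2 ≤ c) (h2 : c ≤ (N:ℤ)+1) :
    (∑ j : Fin N, if c = ((j:ℕ):ℤ) then y (((j:ℕ):ℤ)+1) else 0) = y (c+1) := by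
  by_cases hc : 0 ≤ c ∧ c ≤ (N:ℤ)-1
  · have hlt : c.toNat < N := by omega
    set j₀ : Fin N := ⟨c.toNat, hlt⟩ with hj₀
    have hcond : ∀ j : Fin N, (c = ((j:ℕ):ℤ)) ↔ j = j₀ := by
      intro j
      constructor
      · intro h; apply Fin.ext; simp only [hj₀]; omega
      · intro h; subst h; simp only [hj₀]; omega
    calc (∑ j : Fin N, if c = ((j:ℕ):ℤ) then y (((j:ℕ):ℤ)+1) else 0)
        = ∑ j : Fin N, if j = j₀ then y (((j:ℕ):ℤ)+1) else 0 := by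
          refine Finset.sum_congr rfl fun j _ => ?_
          by_cases h : j = j₀
          · rw [if_pos ((hcond j).2 h), if_pos h]
          · rw [if_neg (fun hc => h ((hcond j).1 hc)), if_neg h]
      _ = y (((j₀:ℕ):ℤ)+1) := by rw [Finset.sum_ite_eq' Finset.univ j₀]; simp
      _ = y (c+1) := by congr 1; simp only [hj₀]; omega
  · have hz : (∑ j : Fin N, if c = ((j:ℕ):ℤ) then y (((j:ℕ):ℤ)+1) else 0) = 0 := by
      refine Finset.sum_eq_zero fun j _ => ?_
      have := j.isLt
      rw [if_neg]; omega
    rw [hz]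
    obtain ⟨b1, b2, b3, b4⟩ := hy
    have : c = -2 ∨ c = -1 ∨ c = (N:ℤ) ∨ c = (N:ℤ)+1 := by omega
    rcases this with h|h|h|h <;> subst h
    · simpa using b1.symm
    · simpa using b2.symm
    · exact b3.symm
    · exact b4.symm

lemma Vmul_apply {N : ℕ} {y : ℤ → ℝ} (hy : bc N y) (i : Fin (N+1)) :
    (Vmat N *ᵥ xof N y) i = fd y ((i:ℕ):ℤ) := by
  have hi := i.isLt
  have key : ∀ j : Fin N, Vmat N i j * xof N y j
      = (if ((i:ℕ):ℤ) = ((j:ℕ):ℤ) then y (((j:ℕ):ℤ)+1) else 0)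
        - (if ((i:ℕ):ℤ)-1 = ((j:ℕ):ℤ) then y (((j:ℕ):ℤ)+1) else 0) := by
    intro j
    have hj := j.isLt
    simp only [Vmat, xof]
    split_ifs with h1 h2 h3 h4 h5 <;> push_cast <;> first | ring1 | (exfalso; omega)
  simp only [Matrix.mulVec, dotProduct]
  rw [Finset.sum_congr rfl (fun j _ => key j), Finset.sum_sub_distrib,
    esum_eq hy _ (by omega) (by omega), esum_eq hy _ (by omega) (by omega)]
  simp only [fd]
  have : ((i:ℕ):ℤ) + 1 = ((i:ℕ):ℤ) - 1 + 1 + 1 := by ring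
  congr 2 <;> omega

lemma Wmul_apply {N : ℕ} {y : ℤ → ℝ} (hy : bc N y) (i : Fin (N+2)) :
    (Wmat N *ᵥ xof N y) i = fd2 y (((i:ℕ):ℤ)-1) := by
  have hi := i.isLt
  have key : ∀ j : Fin N, Wmat N i j * xof N y j
      = (if ((i:ℕ):ℤ) = ((j:ℕ):ℤ) then y (((j:ℕ):ℤ)+1) else 0)
        - 2*(if ((i:ℕ):ℤ)-1 = ((j:ℕ):ℤ) then y (((j:ℕ):ℤ)+1) else 0)
        + (if ((i:ℕ):ℤ)-2 = ((j:ℕ):ℤ) then y (((j:ℕ):ℤ)+1) else 0) := by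
    intro j
    have hj := j.isLt
    simp only [Wmat, xof]
    split_ifs <;> push_cast <;> first | ring1 | (exfalso; omega)
  simp only [Matrix.mulVec, dotProduct]
  rw [Finset.sum_congr rfl (fun j _ => key j)]
  rw [Finset.sum_add_distrib, Finset.sum_sub_distrib, ← Finset.mul_sum,
    esum_eq hy _ (by omega) (by omega), esum_eq hy _ (by omega) (by omega),
    esum_eq hy _ (by omega) (by omega)]
  simp only [fd2]
  have e1 : ((i:ℕ):ℤ)+1 = ((i:ℕ):ℤ)-1+2 := by ring
  have e2 : ((i:ℕ):ℤ)-1+1 = ((i:ℕ):ℤ) := by ring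
  have e3 : ((i:ℕ):ℤ)-2+1 = ((i:ℕ):ℤ)-1 := by ring
  rw [e1, e2, e3]

lemma dot_self_eq {m n : ℕ} (A : Matrix (Fin m) (Fin n) ℝ) (x : Fin n → ℝ) :
    x ⬝ᵥ ((Aᵀ * A) *ᵥ x) = (A *ᵥ x) ⬝ᵥ (A *ᵥ x) := by
  rw [← Matrix.mulVec_mulVec, dotProduct_mulVec, Matrix.vecMul_transpose]

lemma S0_eq (N : ℕ) (y : ℤ → ℝ) :
    ∑ k ∈ Finset.Icc (1:ℤ) (N:ℤ), y k ^ 2 = ∑ j : Fin N, (xof N y j) ^ 2 := by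
  rw [sum_Icc_range]
  simp only [xof]
  exact (Fin.sum_univ_eq_sum_range (fun i : ℕ => y ((i:ℤ)+1) ^ 2) N).symm

lemma S1_eq {N : ℕ} {y : ℤ → ℝ} (hy : bc N y) :
    ∑ k ∈ Finset.Icc (1:ℤ) ((N:ℤ)+1), (fd y (k-1)) ^ 2
      = (Vmat N *ᵥ xof N y) ⬝ᵥ (Vmat N *ᵥ xof N y) := by
  have hc : ((N:ℤ)+1) = ((N+1 : ℕ):ℤ) := by push_cast; ring
  rw [hc, sum_Icc_range]
  rw [dotProduct]
  have : ∀ i : Fin (N+1), (Vmat N *ᵥ xof N y) i * (Vmat N *ᵥ xof N y) i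
      = (fd y ((i:ℕ):ℤ))^2 := by
    intro i; rw [Vmul_apply hy]; ring
  rw [Finset.sum_congr rfl (fun i _ => this i),
    Fin.sum_univ_eq_sum_range (fun i : ℕ => (fd y (i:ℤ))^2)]
  refine Finset.sum_congr rfl fun i _ => ?_
  have e : ((i:ℤ)+1)-1 = (i:ℤ) := by ring
  rw [e]

lemma S2_eq {N : ℕ} {y : ℤ → ℝ} (hy : bc N y) :
    ∑ k ∈ Finset.Icc (1:ℤ) ((N:ℤ)+2), (fd2 y (k-2)) ^ 2
      = (Wmat N *ᵥ xof N y) ⬝ᵥ (Wmat N *ᵥ xof N y) := by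
  have hc : ((N:ℤ)+2) = ((N+2 : ℕ):ℤ) := by push_cast; ring
  rw [hc, sum_Icc_range]
  rw [dotProduct]
  have : ∀ i : Fin (N+2), (Wmat N *ᵥ xof N y) i * (Wmat N *ᵥ xof N y) i
      = (fd2 y (((i:ℕ):ℤ)-1))^2 := by
    intro i; rw [Wmul_apply hy]; ring
  rw [Finset.sum_congr rfl (fun i _ => this i),
    Fin.sum_univ_eq_sum_range (fun i : ℕ => (fd2 y ((i:ℤ)-1))^2)]
  refine Finset.sum_congr rfl fun i _ => ?_
  have e : ((i:ℤ)+1)-2 = (i:ℤ)-1 := by ring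
  rw [e]

lemma S1_lower {N : ℕ} {y : ℤ → ℝ} (hy : bc N y) {lam1 : ℝ}
    (h : IsSmallestEigenvalue ((Vmat N)ᵀ * Vmat N) lam1) :
    lam1 * ∑ k ∈ Finset.Icc (1:ℤ) (N:ℤ), y k ^ 2
      ≤ ∑ k ∈ Finset.Icc (1:ℤ) ((N:ℤ)+1), (fd y (k-1)) ^ 2 := by
  have hherm : ((Vmat N)ᵀ * Vmat N).IsHermitian := by
    rw [← Matrix.conjTranspose_eq_transpose_of_trivial]
    exact Matrix.isHermitian_conjTranspose_mul_self _
  calc lam1 * ∑ k ∈ Finset.Icc (1:ℤ) (N:ℤ), y k ^ 2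
      = lam1 * ∑ j : Fin N, (xof N y j) ^ 2 := by rw [S0_eq]
    _ ≤ xof N y ⬝ᵥ ((Vmat N)ᵀ * Vmat N).mulVec (xof N y) := quad_lower _ hherm h _
    _ = (Vmat N *ᵥ xof N y) ⬝ᵥ (Vmat N *ᵥ xof N y) := dot_self_eq _ _
    _ = _ := (S1_eq hy).symm

lemma S2_lower {N : ℕ} {y : ℤ → ℝ} (hy : bc N y) {lam2 : ℝ}
    (h : IsSmallestEigenvalue ((Wmat N)ᵀ * Wmat N) lam2) :
    lam2 * ∑ k ∈ Finset.Icc (1:ℤ) (N:ℤ), y k ^ 2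
      ≤ ∑ k ∈ Finset.Icc (1:ℤ) ((N:ℤ)+2), (fd2 y (k-2)) ^ 2 := by
  have hherm : ((Wmat N)ᵀ * Wmat N).IsHermitian := by
    rw [← Matrix.conjTranspose_eq_transpose_of_trivial]
    exact Matrix.isHermitian_conjTranspose_mul_self _
  calc lam2 * ∑ k ∈ Finset.Icc (1:ℤ) (N:ℤ), y k ^ 2
      = lam2 * ∑ j : Fin N, (xof N y j) ^ 2 := by rw [S0_eq]
    _ ≤ xof N y ⬝ᵥ ((Wmat N)ᵀ * Wmat N).mulVec (xof N y) := quad_lower _ hherm h _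
    _ = (Wmat N *ᵥ xof N y) ⬝ᵥ (Wmat N *ᵥ xof N y) := dot_self_eq _ _
    _ = _ := (S2_eq hy).symm

lemma S1_upper {N : ℕ} {y : ℤ → ℝ} (hy : bc N y) :
    ∑ k ∈ Finset.Icc (1:ℤ) ((N:ℤ)+1), (fd y (k-1)) ^ 2
      ≤ 4 * ∑ k ∈ Finset.Icc (1:ℤ) (N:ℤ), y k ^ 2 := by
  obtain ⟨b1, b2, b3, b4⟩ := hy
  have hc : ((N:ℤ)+1) = ((N+1 : ℕ):ℤ) := by push_cast; ring
  rw [hc, sum_Icc_range, sum_Icc_range]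
  set T := ∑ i ∈ Finset.range N, y ((i:ℤ)+1) ^ 2 with hT
  have hA : ∑ i ∈ Finset.range (N+1), y ((i:ℤ)+1) ^ 2 = T := by
    rw [Finset.sum_range_succ, hT]; rw [b3]; ring
  have hB : ∑ i ∈ Finset.range (N+1), y ((i:ℤ)) ^ 2 = T := by
    rw [Finset.sum_range_succ' (fun i : ℕ => y ((i:ℤ)) ^ 2)]
    simp only [Nat.cast_zero, b2]
    rw [hT]
    have : ∀ i ∈ Finset.range N, y (((i+1:ℕ)):ℤ) ^ 2 = y ((i:ℤ)+1) ^ 2 := by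
      intro i _; norm_cast
    rw [Finset.sum_congr rfl this]; ring
  calc ∑ i ∈ Finset.range (N+1), fd y (((i:ℤ)+1)-1) ^ 2
      ≤ ∑ i ∈ Finset.range (N+1), (2 * y ((i:ℤ)+1)^2 + 2 * y ((i:ℤ))^2) := by
        refine Finset.sum_le_sum fun i _ => ?_
        have : ((i:ℤ)+1)-1 = (i:ℤ) := by ring
        rw [this]
        simp only [fd]
        nlinarith [sq_nonneg (y ((i:ℤ)+1) + y ((i:ℤ)))]
    _ = 2 * (∑ i ∈ Finset.range (N+1), y ((i:ℤ)+1)^2)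
        + 2 * (∑ i ∈ Finset.range (N+1), y ((i:ℤ))^2) := by
        rw [Finset.sum_add_distrib, ← Finset.mul_sum, ← Finset.mul_sum]
    _ = 4 * T := by rw [hA, hB]; ring

lemma S2_upper {N : ℕ} {y : ℤ → ℝ} (hy : bc N y) :
    ∑ k ∈ Finset.Icc (1:ℤ) ((N:ℤ)+2), (fd2 y (k-2)) ^ 2
      ≤ 16 * ∑ k ∈ Finset.Icc (1:ℤ) (N:ℤ), y k ^ 2 := by
  obtain ⟨b1, b2, b3, b4⟩ := hy
  have hc : ((N:ℤ)+2) = ((N+2 : ℕ):ℤ) := by push_cast; ring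
  rw [hc, sum_Icc_range, sum_Icc_range]
  set T := ∑ i ∈ Finset.range N, y ((i:ℤ)+1) ^ 2 with hT
  have hA1 : ∑ i ∈ Finset.range (N+1), y ((i:ℤ)+1) ^ 2 = T := by
    rw [Finset.sum_range_succ, hT, b3]; ring
  have hA2 : ∑ i ∈ Finset.range (N+2), y ((i:ℤ)+1) ^ 2 = T := by
    rw [Finset.sum_range_succ]
    have e2 : (((N+1:ℕ)):ℤ)+1 = (N:ℤ)+2 := by push_cast; ring
    rw [e2, b4, hA1]; all_goals ring
  have hB1 : ∑ i ∈ Finset.range (N+1), y ((i:ℤ)) ^ 2 = T := by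
    rw [Finset.sum_range_succ' (fun i : ℕ => y ((i:ℤ)) ^ 2)]
    simp only [Nat.cast_zero, b2]
    have : ∀ i ∈ Finset.range N, y (((i+1:ℕ)):ℤ) ^ 2 = y ((i:ℤ)+1) ^ 2 := by
      intro i _; norm_cast
    rw [Finset.sum_congr rfl this, hT]; all_goals ring
  have hB2 : ∑ i ∈ Finset.range (N+2), y ((i:ℤ)) ^ 2 = T := by
    rw [Finset.sum_range_succ' (fun i : ℕ => y ((i:ℤ)) ^ 2)]
    simp only [Nat.cast_zero, b2]
    have : ∀ i ∈ Finset.range (N+1), y (((i+1:ℕ)):ℤ) ^ 2 = y ((i:ℤ)+1) ^ 2 := by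
      intro i _; norm_cast
    rw [Finset.sum_congr rfl this, hA1]; all_goals ring
  have hC2 : ∑ i ∈ Finset.range (N+2), y ((i:ℤ)-1) ^ 2 = T := by
    rw [Finset.sum_range_succ' (fun i : ℕ => y ((i:ℤ)-1) ^ 2)]
    have e0 : ((0:ℕ):ℤ)-1 = (-1 : ℤ) := by norm_num
    rw [e0, b1]
    have : ∀ i ∈ Finset.range (N+1), y (((i+1:ℕ):ℤ)-1) ^ 2 = y ((i:ℤ)) ^ 2 := by
      intro i _
      have e : ((i+1:ℕ):ℤ)-1 = (i:ℤ) := by omega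
      rw [e]
    rw [Finset.sum_congr rfl this, hB1]; all_goals ring
  calc ∑ i ∈ Finset.range (N+2), fd2 y (((i:ℤ)+1)-2) ^ 2
      ≤ ∑ i ∈ Finset.range (N+2),
          (4 * y ((i:ℤ)+1)^2 + 8 * y ((i:ℤ))^2 + 4 * y ((i:ℤ)-1)^2) := by
        refine Finset.sum_le_sum fun i _ => ?_
        simp only [fd2]
        have e1 : ((i:ℤ)+1)-2+2 = (i:ℤ)+1 := by ring
        have e2 : ((i:ℤ)+1)-2+1 = (i:ℤ) := by ring
        have e3 : ((i:ℤ)+1)-2 = (i:ℤ)-1 := by ring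
        rw [e1, e2, e3]
        nlinarith [sq_nonneg (y ((i:ℤ)+1) + y ((i:ℤ))), sq_nonneg (y ((i:ℤ)) + y ((i:ℤ)-1)),
          sq_nonneg (y ((i:ℤ)+1) - y ((i:ℤ)-1))]
    _ = 4 * (∑ i ∈ Finset.range (N+2), y ((i:ℤ)+1)^2)
        + 8 * (∑ i ∈ Finset.range (N+2), y ((i:ℤ))^2)
        + 4 * (∑ i ∈ Finset.range (N+2), y ((i:ℤ)-1)^2) := by
        rw [Finset.sum_add_distrib, Finset.sum_add_distrib,
          ← Finset.mul_sum, ← Finset.mul_sum, ← Finset.mul_sum]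
    _ = 16 * T := by rw [hA2, hB2, hC2]; ring

lemma Fint_hasDerivAt {f : ℤ → ℝ → ℝ} {k : ℤ} (hfk : Continuous (f k)) (s : ℝ) :
    HasDerivAt (Fint f k) (f k s) s :=
  (hfk.integral_hasStrictDerivAt 0 s).hasDerivAt

lemma Fint_continuous {f : ℤ → ℝ → ℝ} {k : ℤ} (hfk : Continuous (f k)) :
    Continuous (Fint f k) :=
  continuous_iff_continuousAt.2 fun s => (Fint_hasDerivAt hfk s).continuousAt

lemma Fint_lower {f : ℤ → ℝ → ℝ} {k : ℤ} (hfk : Continuous (f k)) {m : ℝ} (hm : 0 < m)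
    (hs : ∀ s : ℝ, m ≤ |s| → 0 ≤ s * f k s) : ∃ B : ℝ, ∀ s : ℝ, B ≤ Fint f k s := by
  obtain ⟨s₀, hs₀, hmin⟩ := (isCompact_Icc : IsCompact (Set.Icc (-m) m)).exists_isMinOn
    ⟨0, by constructor <;> linarith⟩ (Fint_continuous hfk).continuousOn
  refine ⟨Fint f k s₀, fun s => ?_⟩
  rcases le_or_gt s (-m) with h | h
  · have hint : Fint f k (-m) + ∫ t in (-m)..s, f k t = Fint f k s :=
      intervalIntegral.integral_add_adjacent_intervals
        (hfk.intervalIntegrable _ _) (hfk.intervalIntegrable _ _)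
    have hnp : (∫ t in s..(-m), f k t) ≤ 0 := by
      have h1 : 0 ≤ ∫ t in s..(-m), -(f k t) := by
        apply intervalIntegral.integral_nonneg h
        intro u hu
        have hu2 : u ≤ -m := hu.2
        have := hs u (by rw [abs_of_nonpos (by linarith)]; linarith)
        nlinarith
      rw [intervalIntegral.integral_neg] at h1
      linarith
    have hsym : (∫ t in (-m)..s, f k t) = -∫ t in s..(-m), f k t :=
      intervalIntegral.integral_symm _ _
    have hmm : Fint f k s₀ ≤ Fint f k (-m) := hmin ⟨le_refl _, by linarith⟩
    linarith
  · rcases le_or_gt s m with h2 | h2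
    · exact hmin ⟨by linarith, h2⟩
    · have hint : Fint f k m + ∫ t in m..s, f k t = Fint f k s :=
        intervalIntegral.integral_add_adjacent_intervals
          (hfk.intervalIntegrable _ _) (hfk.intervalIntegrable _ _)
      have hnn : 0 ≤ ∫ t in m..s, f k t := by
        apply intervalIntegral.integral_nonneg (by linarith)
        intro u hu
        have hu1 : m ≤ u := hu.1
        have := hs u (by rw [abs_of_nonneg (by linarith)]; linarith)
        nlinarith
      have hmm : Fint f k s₀ ≤ Fint f k m := hmin ⟨by linarith, le_refl _⟩
      linarith

def extv (N : ℕ) (x : Fin N → ℝ) : ℤ → ℝ :=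
  fun k => ∑ j : Fin N, if k = ((j:ℕ):ℤ)+1 then x j else 0

lemma extv_bc (N : ℕ) (x : Fin N → ℝ) : bc N (extv N x) := by
  refine ⟨?_, ?_, ?_, ?_⟩ <;>
    · refine Finset.sum_eq_zero fun j _ => ?_
      have := j.isLt
      rw [if_neg (by omega)]

lemma extv_eval (N : ℕ) (x : Fin N → ℝ) (j : Fin N) : extv N x (((j:ℕ):ℤ)+1) = x j := by
  unfold extv
  have : ∀ j' : Fin N, (((j:ℕ):ℤ)+1 = ((j':ℕ):ℤ)+1) ↔ (j' = j) := by
    intro j'; constructor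
    · intro h; apply Fin.ext; omega
    · intro h; subst h; rfl
  calc (∑ j' : Fin N, if ((j:ℕ):ℤ)+1 = ((j':ℕ):ℤ)+1 then x j' else 0)
      = ∑ j' : Fin N, if j' = j then x j' else 0 := by
        refine Finset.sum_congr rfl fun j' _ => ?_
        by_cases h : j' = j
        · rw [if_pos ((this j').2 h), if_pos h]
        · rw [if_neg (fun hc => h ((this j').1 hc)), if_neg h]
    _ = x j := by rw [Finset.sum_ite_eq' Finset.univ j]; simp

lemma xof_extv (N : ℕ) (x : Fin N → ℝ) : xof N (extv N x) = x := by
  funext j; exact extv_eval N x j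

lemma extv_xof {N : ℕ} {y : ℤ → ℝ} (hy : bc N y) (k : ℤ) (h1 : -1 ≤ k) (h2 : k ≤ (N:ℤ)+2) :
    extv N (xof N y) k = y k := by
  have step : extv N (xof N y) k
      = ∑ j : Fin N, if k - 1 = ((j:ℕ):ℤ) then y (((j:ℕ):ℤ)+1) else 0 := by
    refine Finset.sum_congr rfl fun j _ => ?_
    by_cases h : k - 1 = ((j:ℕ):ℤ)
    · rw [if_pos (by omega), if_pos h]; rfl
    · rw [if_neg (by omega), if_neg h]
  rw [step, esum_eq hy (k-1) (by omega) (by omega)]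
  congr 1; omega

lemma J_congr {N : ℕ} {p q : ℤ → ℝ} {f : ℤ → ℝ → ℝ} {y z : ℤ → ℝ}
    (h : ∀ k : ℤ, -1 ≤ k → k ≤ (N:ℤ)+2 → y k = z k) :
    _root_.J N p q f y = _root_.J N p q f z := by
  unfold _root_.J
  congr 1
  · congr 1
    · refine Finset.sum_congr rfl fun k hk => ?_
      rw [Finset.mem_Icc] at hk
      unfold fd2
      rw [h (k-2+2) (by omega) (by omega), h (k-2+1) (by omega) (by omega),
        h (k-2) (by omega) (by omega)]
    · refine Finset.sum_congr rfl fun k hk => ?_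
      rw [Finset.mem_Icc] at hk
      unfold fd
      rw [h (k-1+1) (by omega) (by omega), h (k-1) (by omega) (by omega)]
  · refine Finset.sum_congr rfl fun k hk => ?_
    rw [Finset.mem_Icc] at hk
    rw [h k (by omega) (by omega)]

lemma extv_continuous_eval (N : ℕ) (k : ℤ) :
    Continuous fun x : EuclideanSpace ℝ (Fin N) => extv N x k := by
  unfold extv
  apply continuous_finset_sum
  intro j _
  by_cases h : k = ((j:ℕ):ℤ)+1
  · simp only [h, if_pos rfl]
    exact (continuous_apply j).comp (PiLp.continuous_ofLp 2 _)
  · simp only [if_neg h]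
    exact continuous_const

lemma Jt_continuous (N : ℕ) (p q : ℤ → ℝ) (f : ℤ → ℝ → ℝ)
    (hf : ∀ k ∈ Finset.Icc (1 : ℤ) (N : ℤ), Continuous (f k)) :
    Continuous fun x : EuclideanSpace ℝ (Fin N) => _root_.J N p q f (extv N x) := by
  unfold _root_.J
  apply Continuous.add
  · apply Continuous.sub
    · apply continuous_finset_sum
      intro k _
      apply Continuous.mul continuous_const
      apply Continuous.pow
      unfold fd2
      exact ((extv_continuous_eval N _).sub
        ((continuous_const.mul (extv_continuous_eval N _)))).add (extv_continuous_eval N _)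
    · apply continuous_finset_sum
      intro k _
      apply Continuous.mul continuous_const
      apply Continuous.pow
      unfold fd
      exact (extv_continuous_eval N _).sub (extv_continuous_eval N _)
  · apply continuous_finset_sum
    intro k hk
    exact (Fint_continuous (hf k hk)).comp (extv_continuous_eval N _)

lemma solves_of_min (N : ℕ) (p q : ℤ → ℝ) (f : ℤ → ℝ → ℝ)
    (hf : ∀ k ∈ Finset.Icc (1 : ℤ) (N : ℤ), Continuous (f k))
    (y₀ : ℤ → ℝ) (hy₀ : bc N y₀)
    (hmin : ∀ y : ℤ → ℝ, bc N y → _root_.J N p q f y₀ ≤ _root_.J N p q f y) :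
    solves N p q f y₀ := by
  intro j hj
  rw [Finset.mem_Icc] at hj
  classical
  set δ : ℤ → ℝ := fun k => if k = j then (1:ℝ) else 0 with hδ
  set yt : ℝ → ℤ → ℝ := fun t k => y₀ k + t * δ k with hyt
  have hbct : ∀ t, bc N (yt t) := by
    intro t
    obtain ⟨b1, b2, b3, b4⟩ := hy₀
    refine ⟨?_, ?_, ?_, ?_⟩ <;> simp only [hyt, hδ] <;>
      rw [if_neg (by omega)] <;> simp [b1, b2, b3, b4]
  set g : ℝ → ℝ := fun t => _root_.J N p q f (yt t) with hg
  have hg0 : ∀ t, g 0 ≤ g t := by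
    intro t
    have h0 : yt 0 = y₀ := by funext k; simp [hyt]
    rw [hg]
    simp only [h0]
    exact hmin _ (hbct t)
  -- derivative of g at 0
  have hfd2lin : ∀ (c : ℤ) (t : ℝ), fd2 (yt t) c = fd2 y₀ c + t * fd2 δ c := by
    intro c t; simp only [fd2, hyt]; ring
  have hfdlin : ∀ (c : ℤ) (t : ℝ), fd (yt t) c = fd y₀ c + t * fd δ c := by
    intro c t; simp only [fd, hyt]; ring
  set D : ℝ := (∑ k ∈ Finset.Icc (1:ℤ) ((N:ℤ)+2), p k * fd2 y₀ (k-2) * fd2 δ (k-2))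
    - (∑ k ∈ Finset.Icc (1:ℤ) ((N:ℤ)+1), q k * fd y₀ (k-1) * fd δ (k-1))
    + (∑ k ∈ Finset.Icc (1:ℤ) (N:ℤ), f k (y₀ k) * δ k) with hD
  have hderiv : HasDerivAt g D 0 := by
    have hA : HasDerivAt (fun t => ∑ k ∈ Finset.Icc (1:ℤ) ((N:ℤ)+2),
        p k / 2 * (fd2 (yt t) (k-2))^2)
        (∑ k ∈ Finset.Icc (1:ℤ) ((N:ℤ)+2), p k * fd2 y₀ (k-2) * fd2 δ (k-2)) 0 := by
      apply HasDerivAt.fun_sum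
      intro k _
      have heq : (fun t => p k / 2 * (fd2 (yt t) (k-2))^2)
          = fun t => p k / 2 * (fd2 y₀ (k-2) + t * fd2 δ (k-2))^2 := by
        funext t; rw [hfd2lin]
      rw [heq]
      have h0 : HasDerivAt (fun t : ℝ => fd2 y₀ (k-2) + t * fd2 δ (k-2)) (fd2 δ (k-2)) 0 := by
        simpa using ((hasDerivAt_id (0:ℝ)).mul_const (fd2 δ (k-2))).const_add (fd2 y₀ (k-2))
      have h1 := (h0.pow 2).const_mul (p k / 2)
      refine h1.congr_deriv ?_
      simp; ring
    have hB : HasDerivAt (fun t => ∑ k ∈ Finset.Icc (1:ℤ) ((N:ℤ)+1),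
        q k / 2 * (fd (yt t) (k-1))^2)
        (∑ k ∈ Finset.Icc (1:ℤ) ((N:ℤ)+1), q k * fd y₀ (k-1) * fd δ (k-1)) 0 := by
      apply HasDerivAt.fun_sum
      intro k _
      have heq : (fun t => q k / 2 * (fd (yt t) (k-1))^2)
          = fun t => q k / 2 * (fd y₀ (k-1) + t * fd δ (k-1))^2 := by
        funext t; rw [hfdlin]
      rw [heq]
      have h0 : HasDerivAt (fun t : ℝ => fd y₀ (k-1) + t * fd δ (k-1)) (fd δ (k-1)) 0 := by
        simpa using ((hasDerivAt_id (0:ℝ)).mul_const (fd δ (k-1))).const_add (fd y₀ (k-1))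
      have h1 := (h0.pow 2).const_mul (q k / 2)
      refine h1.congr_deriv ?_
      simp; ring
    have hC : HasDerivAt (fun t => ∑ k ∈ Finset.Icc (1:ℤ) (N:ℤ), Fint f k (yt t k))
        (∑ k ∈ Finset.Icc (1:ℤ) (N:ℤ), f k (y₀ k) * δ k) 0 := by
      apply HasDerivAt.fun_sum
      intro k hk
      have heq : (fun t => Fint f k (yt t k)) = fun t => Fint f k (y₀ k + t * δ k) := by
        funext t; rfl
      rw [heq]
      have h0 : HasDerivAt (fun t : ℝ => y₀ k + t * δ k) (δ k) 0 := by
        simpa using ((hasDerivAt_id (0:ℝ)).mul_const (δ k)).const_add (y₀ k)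
      have hout : HasDerivAt (Fint f k) (f k (y₀ k + 0 * δ k)) (y₀ k + 0 * δ k) :=
        Fint_hasDerivAt (hf k hk) _
      have := HasDerivAt.comp (0:ℝ) hout h0
      simp at this
      exact this
    have := (hA.sub hB).add hC
    exact this
  have hDzero : D = 0 := by
    have hloc : IsLocalMin g 0 := Filter.Eventually.of_forall hg0
    exact hloc.hasDerivAt_eq_zero hderiv
  -- now compute the three sums
  have hsum3 : (∑ k ∈ Finset.Icc (1:ℤ) (N:ℤ), f k (y₀ k) * δ k) = f j (y₀ j) := by
    have : ∀ k ∈ Finset.Icc (1:ℤ) (N:ℤ), f k (y₀ k) * δ k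
        = if k = j then f k (y₀ k) else 0 := by
      intro k _; simp only [hδ]; split_ifs <;> ring
    rw [Finset.sum_congr rfl this, Finset.sum_ite_eq' (Finset.Icc (1:ℤ) (N:ℤ)) j]
    rw [if_pos (Finset.mem_Icc.2 hj)]
  have hsum1 : (∑ k ∈ Finset.Icc (1:ℤ) ((N:ℤ)+2), p k * fd2 y₀ (k-2) * fd2 δ (k-2))
      = fd2 (fun j' => p j' * fd2 y₀ (j' - 2)) j := by
    have hsub : ({j, j+1, j+2} : Finset ℤ) ⊆ Finset.Icc (1:ℤ) ((N:ℤ)+2) := by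
      intro k hk
      simp only [Finset.mem_insert, Finset.mem_singleton] at hk
      rw [Finset.mem_Icc]; omega
    rw [← Finset.sum_subset hsub]
    · have hne1 : (j : ℤ) ∉ ({j+1, j+2} : Finset ℤ) := by
        simp only [Finset.mem_insert, Finset.mem_singleton]; omega
      have hne2 : (j+1 : ℤ) ∉ ({j+2} : Finset ℤ) := by
        simp only [Finset.mem_singleton]; omega
      rw [Finset.sum_insert hne1, Finset.sum_insert hne2, Finset.sum_singleton]
      have e1 : fd2 δ (j-2) = 1 := by
        simp only [fd2, hδ]
        rw [if_pos (by omega), if_neg (by omega), if_neg (by omega)]; ring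
      have e2 : fd2 δ (j+1-2) = -2 := by
        simp only [fd2, hδ]
        rw [if_neg (by omega), if_pos (by omega), if_neg (by omega)]; ring
      have e3 : fd2 δ (j+2-2) = 1 := by
        simp only [fd2, hδ]
        rw [if_neg (by omega), if_neg (by omega), if_pos (by omega)]; ring
      rw [e1, e2, e3]
      simp only [fd2]
      have a1 : (j:ℤ)+2-2 = j := by ring
      have a2 : (j:ℤ)+1-2 = j-1 := by ring
      rw [a1, a2]
      ring
    · intro k hk hknot
      simp only [Finset.mem_insert, Finset.mem_singleton] at hknot
      push_neg at hknot
      have : fd2 δ (k-2) = 0 := by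
        simp only [fd2, hδ]
        rw [if_neg (by omega), if_neg (by omega), if_neg (by omega)]; ring
      rw [this]; ring
  have hsum2 : (∑ k ∈ Finset.Icc (1:ℤ) ((N:ℤ)+1), q k * fd y₀ (k-1) * fd δ (k-1))
      = -fd (fun j' => q j' * fd y₀ (j' - 1)) j := by
    have hsub : ({j, j+1} : Finset ℤ) ⊆ Finset.Icc (1:ℤ) ((N:ℤ)+1) := by
      intro k hk
      simp only [Finset.mem_insert, Finset.mem_singleton] at hk
      rw [Finset.mem_Icc]; omega
    rw [← Finset.sum_subset hsub]
    · have hne1 : (j : ℤ) ∉ ({j+1} : Finset ℤ) := by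
        simp only [Finset.mem_singleton]; omega
      rw [Finset.sum_insert hne1, Finset.sum_singleton]
      have e1 : fd δ (j-1) = 1 := by
        simp only [fd, hδ]
        rw [if_pos (by omega), if_neg (by omega)]; ring
      have e2 : fd δ (j+1-1) = -1 := by
        simp only [fd, hδ]
        rw [if_neg (by omega), if_pos (by omega)]; ring
      rw [e1, e2]
      simp only [fd]
      have a1 : (j:ℤ)+1-1 = j := by ring
      rw [a1]
      ring
    · intro k hk hknot
      simp only [Finset.mem_insert, Finset.mem_singleton] at hknot
      push_neg at hknot
      have : fd δ (k-1) = 0 := by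
        simp only [fd, hδ]
        rw [if_neg (by omega), if_neg (by omega)]; ring
      rw [this]; ring
  rw [hD, hsum1, hsum2, hsum3] at hDzero
  linarith

/-- If `s·f(k,s) ≥ 0` for `|s| ≥ m` and `η'(p)·p_min − η(q)·q_max > 0`, then `J`
is coercive on `E` and the BVP has at least one solution. -/
theorem stmt_9 (N : ℕ) (hN : 1 ≤ N) (p q : ℤ → ℝ) (f : ℤ → ℝ → ℝ)
    (hf : ∀ k ∈ Finset.Icc (1 : ℤ) (N : ℤ), Continuous (f k))
    (m : ℝ) (hm : 0 < m)
    (hsign : ∀ k ∈ Finset.Icc (1 : ℤ) (N : ℤ), ∀ s : ℝ, m ≤ |s| → 0 ≤ s * f k s)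
    (lam1 lam2 : ℝ)
    (hlam1 : IsSmallestEigenvalue ((Vmat N)ᵀ * Vmat N) lam1)
    (hlam2 : IsSmallestEigenvalue ((Wmat N)ᵀ * Wmat N) lam2)
    (pmin qmax : ℝ)
    (hpmin : IsLeast (p '' Set.Icc (1 : ℤ) ((N : ℤ) + 2)) pmin)
    (hqmax : IsGreatest (q '' Set.Icc (1 : ℤ) ((N : ℤ) + 1)) qmax)
    (hcond : 0 < (if 0 ≤ pmin then lam2 else 16) * pmin
        - (if qmax < 0 then lam1 else 4) * qmax) :
    (∀ C : ℝ, ∃ R : ℝ, ∀ y : ℤ → ℝ, bc N y →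
        R ≤ ∑ k ∈ Finset.Icc (1 : ℤ) (N : ℤ), (y k) ^ 2 → C ≤ J N p q f y)
      ∧ ∃ y : ℤ → ℝ, bc N y ∧ solves N p q f y := by
    classical
  set c : ℝ := (if 0 ≤ pmin then lam2 else 16) * pmin
      - (if qmax < 0 then lam1 else 4) * qmax with hc
  have hcpos : 0 < c := hcond
  clear_value c
  have hBex : ∀ k : ℤ, ∃ B : ℝ, k ∈ Finset.Icc (1:ℤ) (N:ℤ) → ∀ s : ℝ, B ≤ Fint f k s := by
    intro k
    by_cases hk : k ∈ Finset.Icc (1:ℤ) (N:ℤ)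
    · obtain ⟨B, hB⟩ := Fint_lower (hf k hk) hm (hsign k hk)
      exact ⟨B, fun _ => hB⟩
    · exact ⟨0, fun h => absurd h hk⟩
  choose B hB using hBex
  set C0 : ℝ := ∑ k ∈ Finset.Icc (1:ℤ) (N:ℤ), B k with hC0
  clear_value C0
  have hJdef : ∀ y : ℤ → ℝ, J N p q f y
      = ∑ k ∈ Finset.Icc (1 : ℤ) ((N : ℤ) + 2), p k / 2 * (fd2 y (k - 2)) ^ 2
        - ∑ k ∈ Finset.Icc (1 : ℤ) ((N : ℤ) + 1), q k / 2 * (fd y (k - 1)) ^ 2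
        + ∑ k ∈ Finset.Icc (1 : ℤ) (N : ℤ), Fint f k (y k) := fun _ => rfl
  have key : ∀ y : ℤ → ℝ, bc N y →
      c / 2 * (∑ k ∈ Finset.Icc (1:ℤ) (N:ℤ), y k ^ 2) + C0 ≤ J N p q f y := by
    intro y hy
    set S0 := ∑ k ∈ Finset.Icc (1:ℤ) (N:ℤ), y k ^ 2 with hS0
    set S1 := ∑ k ∈ Finset.Icc (1:ℤ) ((N:ℤ)+1), (fd y (k-1))^2 with hS1
    set S2 := ∑ k ∈ Finset.Icc (1:ℤ) ((N:ℤ)+2), (fd2 y (k-2))^2 with hS2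
    have hT2 : pmin / 2 * S2
        ≤ ∑ k ∈ Finset.Icc (1:ℤ) ((N:ℤ)+2), p k / 2 * (fd2 y (k-2))^2 := by
      rw [hS2, Finset.mul_sum]
      refine Finset.sum_le_sum fun k hk => ?_
      have hple : pmin ≤ p k := hpmin.2 ⟨k, by rw [Finset.mem_Icc] at hk; exact hk, rfl⟩
      nlinarith [sq_nonneg (fd2 y (k-2))]
    have hT1 : (∑ k ∈ Finset.Icc (1:ℤ) ((N:ℤ)+1), q k / 2 * (fd y (k-1))^2)
        ≤ qmax / 2 * S1 := by
      rw [hS1, Finset.mul_sum]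
      refine Finset.sum_le_sum fun k hk => ?_
      have hqle : q k ≤ qmax := hqmax.2 ⟨k, by rw [Finset.mem_Icc] at hk; exact hk, rfl⟩
      nlinarith [sq_nonneg (fd y (k-1))]
    have hT2' : (if 0 ≤ pmin then lam2 else 16) * pmin / 2 * S0 ≤ pmin / 2 * S2 := by
      by_cases hp : 0 ≤ pmin
      · rw [if_pos hp]
        have h2 := S2_lower hy hlam2
        have h3 := mul_le_mul_of_nonneg_left h2 (by linarith : (0:ℝ) ≤ pmin / 2)
        calc lam2 * pmin / 2 * S0 = pmin / 2 * (lam2 * S0) := by ring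
          _ ≤ pmin / 2 * S2 := h3
      · rw [if_neg hp]
        push_neg at hp
        have h2 := S2_upper hy
        have h3 := mul_le_mul_of_nonpos_left h2 (by linarith : pmin / 2 ≤ 0)
        calc (16:ℝ) * pmin / 2 * S0 = pmin / 2 * (16 * S0) := by ring
          _ ≤ pmin / 2 * S2 := h3
    have hT1' : qmax / 2 * S1 ≤ (if qmax < 0 then lam1 else 4) * qmax / 2 * S0 := by
      by_cases hq : qmax < 0
      · rw [if_pos hq]
        have h1 := S1_lower hy hlam1
        have h3 := mul_le_mul_of_nonpos_left h1 (by linarith : qmax / 2 ≤ 0)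
        calc qmax / 2 * S1 ≤ qmax / 2 * (lam1 * S0) := h3
          _ = lam1 * qmax / 2 * S0 := by ring
      · rw [if_neg hq]
        push_neg at hq
        have h1 := S1_upper hy
        have h3 := mul_le_mul_of_nonneg_left h1 (by linarith : (0:ℝ) ≤ qmax / 2)
        calc qmax / 2 * S1 ≤ qmax / 2 * (4 * S0) := h3
          _ = 4 * qmax / 2 * S0 := by ring
    have hTF : C0 ≤ ∑ k ∈ Finset.Icc (1:ℤ) (N:ℤ), Fint f k (y k) := by
      rw [hC0]
      exact Finset.sum_le_sum fun k hk => hB k hk (y k)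
    have hceq : c / 2 * S0 = (if 0 ≤ pmin then lam2 else 16) * pmin / 2 * S0
        - (if qmax < 0 then lam1 else 4) * qmax / 2 * S0 := by rw [hc]; ring
    rw [hJdef y]
    linarith [hT2, hT1, hT2', hT1', hTF, hceq]
  have part1 : ∀ C : ℝ, ∃ R : ℝ, ∀ y : ℤ → ℝ, bc N y →
      R ≤ ∑ k ∈ Finset.Icc (1 : ℤ) (N : ℤ), (y k) ^ 2 → C ≤ J N p q f y := by
    intro C
    refine ⟨max 0 ((C - C0) * 2 / c), fun y hy hRy => ?_⟩
    have hkey := key y hy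
    have h1 : (C - C0) * 2 / c ≤ ∑ k ∈ Finset.Icc (1:ℤ) (N:ℤ), y k ^ 2 :=
      le_trans (le_max_right _ _) hRy
    rw [div_le_iff₀ hcpos] at h1
    nlinarith [hkey]
  refine ⟨part1, ?_⟩
  have hJtc : Continuous (fun x : EuclideanSpace ℝ (Fin N) => J N p q f (extv N x)) :=
    Jt_continuous N p q f hf
  obtain ⟨R, hR⟩ := part1 (J N p q f (extv N 0))
  set r : ℝ := Real.sqrt (max R 0) with hr
  have hrnn : 0 ≤ r := Real.sqrt_nonneg _
  have hK : IsCompact (Metric.closedBall (0 : EuclideanSpace ℝ (Fin N)) r) :=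
    isCompact_closedBall _ _
  obtain ⟨x₀, hx₀K, hminK⟩ := hK.exists_isMinOn ⟨0, Metric.mem_closedBall_self hrnn⟩
    hJtc.continuousOn
  have hglobal : ∀ x : EuclideanSpace ℝ (Fin N),
      J N p q f (extv N x₀) ≤ J N p q f (extv N x) := by
    intro x
    by_cases hx : x ∈ Metric.closedBall (0 : EuclideanSpace ℝ (Fin N)) r
    · exact isMinOn_iff.1 hminK x hx
    · have hxnorm : r < ‖x‖ := by
        rw [Metric.mem_closedBall, dist_zero_right] at hx
        linarith [not_le.1 hx]
      have hsum : (∑ k ∈ Finset.Icc (1:ℤ) (N:ℤ), (extv N x k) ^ 2) = ‖x‖^2 := by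
        rw [S0_eq N (extv N x), xof_extv N x, EuclideanSpace.norm_eq,
          Real.sq_sqrt (Finset.sum_nonneg fun i _ => sq_nonneg _)]
        refine Finset.sum_congr rfl fun i _ => ?_
        rw [Real.norm_eq_abs, sq_abs]
      have hge : R ≤ ∑ k ∈ Finset.Icc (1:ℤ) (N:ℤ), (extv N x k) ^ 2 := by
        rw [hsum]
        have h2 : r^2 = max R 0 := Real.sq_sqrt (le_max_right R 0)
        nlinarith [le_max_left R 0]
      have hJ0 := hR (extv N x) (extv_bc N x) hge
      have h0 : J N p q f (extv N x₀) ≤ J N p q f (extv N 0) :=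
        isMinOn_iff.1 hminK 0 (Metric.mem_closedBall_self hrnn)
      exact le_trans h0 hJ0
  refine ⟨extv N x₀, extv_bc N x₀, ?_⟩
  apply solves_of_min N p q f hf (extv N x₀) (extv_bc N x₀)
  intro y hy
  have heq : J N p q f y = J N p q f (extv N (xof N y)) :=
    J_congr (fun k h1 h2 => (extv_xof hy k h1 h2).symm)
  rw [heq]
  exact hglobal (WithLp.toLp 2 (xof N y))
end
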